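/- Let {S_y : y ∈ Y} be a product r.c.p. of R with respect to Q, for each A ∈ 𝔄 let B_A := {y ∈ Y : S_y(A) > 0}, and let ρ be a lifting on (Y,𝔅,Q). Then the following are equivalent: (i) whenever R(A×B)=0, either Q(B)=0 or S_y(A)=0 for all y ∈ ρ(B) (condition (IT)); (ii) B_A ⊆ ρ(B_A) for every A ∈ 𝔄. -/

import Mathlib

open MeasureTheory Set

/-- A lifting on the probability space given by `Q`. -/
def IsLifting {Y : Type*} [MeasurableSpace Y] (Q : Measure Y) (ρ : Set Y → Set Y) : Prop :=
  (∀ B, MeasurableSet B → MeasurableSet (ρ B) ∧ Q (symmDiff B (ρ B)) = 0) ∧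
  (∀ B B', MeasurableSet B → MeasurableSet B' → Q (symmDiff B B') = 0 → ρ B = ρ B') ∧
  ρ ∅ = ∅ ∧ ρ Set.univ = Set.univ ∧
  (∀ B B', MeasurableSet B → MeasurableSet B' → ρ (B ∩ B') = ρ B ∩ ρ B') ∧
  (∀ B, MeasurableSet B → ρ Bᶜ = (ρ B)ᶜ)

theorem stmt4 {X Y : Type*} [MeasurableSpace X] [MeasurableSpace Y]
    (P : Measure X) (Q : Measure Y) (R : Measure (X × Y))
    [IsProbabilityMeasure P] [IsProbabilityMeasure Q] [IsProbabilityMeasure R]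
    [Q.IsComplete]
    (hP : R.map Prod.fst = P) (hQ : R.map Prod.snd = Q)
    (S : Y → Measure X) (hSprob : ∀ y, IsProbabilityMeasure (S y))
    (hSmeas : ∀ A : Set X, MeasurableSet A → Measurable fun y => S y A)
    (hSdis : ∀ (A : Set X) (B : Set Y), MeasurableSet A → MeasurableSet B →
      R (A ×ˢ B) = ∫⁻ y in B, S y A ∂Q)
    (ρ : Set Y → Set Y) (hρ : IsLifting Q ρ) :
    (∀ (A : Set X) (B : Set Y), MeasurableSet A → MeasurableSet B →
        R (A ×ˢ B) = 0 → Q B = 0 ∨ ∀ y ∈ ρ B, S y A = 0) ↔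
    (∀ A : Set X, MeasurableSet A → {y : Y | 0 < S y A} ⊆ ρ {y : Y | 0 < S y A}) := by
  obtain ⟨hρ1, hρ2, hρ3, hρ4, hρ5, hρ6⟩ := hρ
  constructor
  · intro h A hA
    have hBA : MeasurableSet {y : Y | 0 < S y A} :=
      measurableSet_lt measurable_const (hSmeas A hA)
    have hR0 : R (A ×ˢ {y : Y | 0 < S y A}ᶜ) = 0 := by
      have hz : ∀ y ∈ {y : Y | 0 < S y A}ᶜ, S y A = 0 := fun y hy =>
        le_antisymm (not_lt.mp hy) zero_le
      rw [hSdis A _ hA hBA.compl,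
        setLIntegral_congr_fun hBA.compl hz]
      simp
    rcases h A _ hA hBA.compl hR0 with hQ0 | hall
    · have he : ρ ({y : Y | 0 < S y A}ᶜ) = ρ ∅ :=
        hρ2 _ _ hBA.compl MeasurableSet.empty (by simpa [symmDiff] using hQ0)
      rw [hρ6 _ hBA, hρ3, compl_empty_iff] at he
      rw [he]; exact subset_univ _
    · intro y hy
      by_contra hyn
      have : y ∈ ρ ({y : Y | 0 < S y A}ᶜ) := by rw [hρ6 _ hBA]; exact hyn
      exact absurd (hall y this) (ne_of_gt hy)
  · intro h A B hA hB hR0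
    by_cases hQB : Q B = 0
    · exact Or.inl hQB
    right
    have hBA : MeasurableSet {y : Y | 0 < S y A} :=
      measurableSet_lt measurable_const (hSmeas A hA)
    have hint : ∫⁻ y in B, S y A ∂Q = 0 := (hSdis A B hA hB).symm.trans hR0
    have hae : ∀ᵐ y ∂Q, y ∈ B → S y A = 0 :=
      (setLIntegral_eq_zero_iff hB (hSmeas A hA)).mp hint
    have hQ0 : Q ({y : Y | 0 < S y A} ∩ B) = 0 := by
      have := ae_iff.mp hae
      convert this using 2
      ext y
      simp [pos_iff_ne_zero, and_comm]
    have he : ρ (B ∩ {y : Y | 0 < S y A}) = ρ ∅ :=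
      hρ2 _ _ (hB.inter hBA) MeasurableSet.empty
        (by simpa [symmDiff, inter_comm] using hQ0)
    rw [hρ3, hρ5 _ _ hB hBA] at he
    intro y hy
    by_contra hyn
    have hyBA : y ∈ ρ {y : Y | 0 < S y A} :=
      h A hA (pos_iff_ne_zero.mpr hyn)
    exact absurd (mem_inter hy hyBA) (by rw [he]; exact notMem_empty y)
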